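/- Let A be a unital F-algebra with involution, char F ≠ 2, and let ∂ be a derivation of h_n(A) under the anticommutator with ∂(E_{ii}) = 0 and ∂(E_{jj}) = 0 for some i ≠ j. Then for every z ∈ A, the matrix ∂(zE_{ij} + z̄E_{ji}) is supported only in positions (i,j) and (j,i); i.e. there is a linear map α : A → A with ∂(zE_{ij} + z̄E_{ji}) = α(z)E_{ij} + α(z)‾E_{ji}. -/

import Mathlib

open Matrix

section aux

variable {A n : Type*} [NonAssocRing A] [StarRing A] [DecidableEq n]

lemma stdBasisMatrix_conjT (i j : n) (z : A) :
    (single i j z)ᴴ = single j i (star z) := by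
  ext a b
  simp only [conjTranspose_apply, single, of_apply]
  by_cases h1 : j = a <;> by_cases h2 : i = b <;> simp [h1, h2]

end aux

/-- If `∂` is a derivation of the hermitian `n × n` matrices
under the anticommutator with `∂(E_ii) = 0` and `∂(E_jj) = 0` for some `i ≠ j`,
then there is an `F`-linear map `α : A → A` such that
`∂(z E_ij + z̄ E_ji) = α(z) E_ij + α(z)‾ E_ji` for every `z`. -/
theorem derivation_offdiagonal_support {F A n : Type*} [Field F] [NonAssocRing A]
    [Module F A] [StarRing A] [Fintype n] [DecidableEq n]
    (h2 : (2 : F) ≠ 0)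
    (hstarl : ∀ (c : F) (z : A), star (c • z) = c • star z)
    (D : Matrix n n A →ₗ[F] Matrix n n A)
    (hpres : ∀ x : Matrix n n A, xᴴ = x → (D x)ᴴ = D x)
    (hleib : ∀ x y : Matrix n n A, xᴴ = x → yᴴ = y →
      D (x * y + y * x) = (D x * y + y * D x) + (x * D y + D y * x))
    (i j : n) (hij : i ≠ j)
    (hEi : D (single i i (1 : A)) = 0)
    (hEj : D (single j j (1 : A)) = 0) :
    ∃ α : A →ₗ[F] A, ∀ z : A,
      D (single i j z + single j i (star z)) =
        single i j (α z) + single j i (star (α z)) := by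
  set M : A → Matrix n n A :=
    fun z => single i j z + single j i (star z) with hMdef
  have hMapp : ∀ (z : A) (a b : n),
      M z a b = single i j z a b + single j i (star z) a b := by
    intro z a b; simp [hMdef, Matrix.add_apply]
  have hMherm : ∀ z : A, (M z)ᴴ = M z := by
    intro z
    simp [hMdef, conjTranspose_add, stdBasisMatrix_conjT, add_comm]
  have hEiherm : (single i i (1 : A))ᴴ = single i i (1 : A) := by
    simp [stdBasisMatrix_conjT]
  have hEjherm : (single j j (1 : A))ᴴ = single j j (1 : A) := by
    simp [stdBasisMatrix_conjT]
  -- entry formulas for multiplication by `E_kk`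
  have hmulleft : ∀ (k a b : n) (X : Matrix n n A),
      (single k k (1 : A) * X) a b = if a = k then X k b else 0 := by
    intro k a b X
    rcases eq_or_ne a k with rfl | ha
    · rw [if_pos rfl, single_mul_apply_same, one_mul]
    · rw [if_neg ha, single_mul_apply_of_ne (h := ha)]
  have hmulright : ∀ (k a b : n) (X : Matrix n n A),
      (X * single k k (1 : A)) a b = if b = k then X a k else 0 := by
    intro k a b X
    rcases eq_or_ne b k with rfl | hb
    · rw [if_pos rfl, mul_single_apply_same, mul_one]
    · rw [if_neg hb, mul_single_apply_of_ne (hbj := hb)]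
  -- `E_kk ∘ M z = M z` for `k = i, j`
  have hanti : ∀ (k : n), (k = i ∨ k = j) →
      ∀ z : A, single k k (1 : A) * M z + M z * single k k (1 : A) = M z := by
    intro k hk z
    ext a b
    rw [Matrix.add_apply, hmulleft, hmulright]
    split_ifs with h1 h2 h2
    · subst h1; subst h2
      rcases hk with rfl | rfl
      · rw [hMapp]; simp [hij, Ne.symm hij]
      · rw [hMapp]; simp [hij, Ne.symm hij]
    · subst h1; exact add_zero _
    · subst h2; exact zero_add _
    · rw [add_zero, hMapp]
      rcases hk with rfl | rfl
      · simp [Ne.symm h1, Ne.symm h2]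
      · simp [Ne.symm h1, Ne.symm h2]
  -- key identities for `N := D (M z)`
  have hkey : ∀ (k : n), (k = i ∨ k = j) → D (single k k (1 : A)) = 0 →
      ∀ z : A, D (M z) =
        single k k (1 : A) * D (M z) + D (M z) * single k k (1 : A) := by
    intro k hk hDk z
    have hherm : (single k k (1 : A))ᴴ = single k k (1 : A) := by
      rcases hk with rfl | rfl
      exacts [hEiherm, hEjherm]
    have h := hleib (single k k (1 : A)) (M z) hherm (hMherm z)
    rw [hanti k hk z, hDk] at h
    simpa using h
  -- entrywise vanishing facts
  have hvanish : ∀ (k : n), (k = i ∨ k = j) → D (single k k (1 : A)) = 0 →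
      ∀ (z : A) (a b : n), a ≠ k → b ≠ k → D (M z) a b = 0 := by
    intro k hk hDk z a b ha hb
    have h := congrFun (congrFun (hkey k hk hDk z) a) b
    rwa [Matrix.add_apply, hmulleft, hmulright, if_neg ha, if_neg hb, add_zero] at h
  have hvi := hvanish i (Or.inl rfl) hEi
  have hvj := hvanish j (Or.inr rfl) hEj
  -- support of `D (M z)`
  have hsupp : ∀ z : A, D (M z) =
      single i j (D (M z) i j) + single j i (D (M z) j i) := by
    intro z
    ext a b
    rw [Matrix.add_apply]
    rcases eq_or_ne a i with rfl | hai
    · rcases eq_or_ne b j with rfl | hbj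
      · simp [Ne.symm hij, hij]
      · rw [hvj z a b hij hbj]
        simp [Ne.symm hbj, Ne.symm hij]
    · rcases eq_or_ne a j with rfl | haj
      · rcases eq_or_ne b i with rfl | hbi
        · simp [Ne.symm hij, hij]
        · rw [hvi z a b (Ne.symm hij) hbi]
          simp [Ne.symm hbi, hij]
      · rcases eq_or_ne b i with rfl | hbi
        · rw [hvj z a b haj hij]
          simp [Ne.symm haj, Ne.symm hai]
        · rw [hvi z a b hai hbi]
          simp [Ne.symm hai, Ne.symm haj]
  -- hermitian symmetry : N j i = star (N i j)
  have hstarN : ∀ z : A, D (M z) j i = star (D (M z) i j) := by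
    intro z
    have h := hpres (M z) (hMherm z)
    have h2 := congrFun (congrFun h j) i
    simpa [conjTranspose_apply] using h2.symm
  refine ⟨{ toFun := fun z => D (M z) i j
            map_add' := ?_
            map_smul' := ?_ }, ?_⟩
  · intro x y
    have hM : M (x + y) = M x + M y := by
      rw [hMdef]
      simp only [star_add, single_add]
      abel
    show D (M (x + y)) i j = D (M x) i j + D (M y) i j
    rw [hM, map_add, Matrix.add_apply]
  · intro c x
    have hM : M (c • x) = c • M x := by
      rw [hMdef]
      simp only [hstarl c x, smul_single, smul_add]
    show D (M (c • x)) i j = (RingHom.id F) c • D (M x) i j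
    rw [hM, D.map_smul, Matrix.smul_apply, RingHom.id_apply]
  · intro z
    show D (M z) = single i j (D (M z) i j) + single j i (star (D (M z) i j))
    rw [← hstarN z]
    exact hsupp z
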